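/- Let T ⊆ T' be an extension of commutative integral domains such that T' is flat as a T-module, and let F and F' be the fraction fields of T and T', respectively, with the canonical inclusions T[Y] ⊆ T'[Y] ⊆ F'[Y] and T[Y] ⊆ F[Y] ⊆ F'[Y] of multivariate polynomial rings in the variables Y = (Y_1, …, Y_m). Let I be a finitely generated ideal of T[Y]. Then, as ideals of T'[Y]: IF'[Y] ∩ T'[Y] = (IF[Y] ∩ T[Y])·T'[Y]. In other words, the contraction to T'[Y] of the extension of I to F'[Y] equals the extension to T'[Y] of the contraction to T[Y] of the extension of I to F[Y]. -/

import Mathlib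

open TensorProduct
set_option synthInstance.maxHeartbeats 1000000
set_option maxHeartbeats 1000000

/-- Core lemma: contraction-extension commutation for flat extensions. -/
theorem aux13 (T T' F F' : Type) [CommRing T] [CommRing T'] [Field F] [Field F']
    [Algebra T T'] [Module.Flat T T'] [Algebra T F] [Module.Flat T F]
    [Algebra T' F'] (hinj' : Function.Injective (algebraMap T' F'))
    [Algebra T F'] [IsScalarTower T T' F']
    (φ : F →+* F') (hφc : φ.comp (algebraMap T F) = algebraMap T F')
    (m : ℕ) (I : Ideal (MvPolynomial (Fin m) T)) :
    Ideal.comap (MvPolynomial.map (algebraMap T' F'))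
        (Ideal.map (MvPolynomial.map (algebraMap T F')) I)
      =
    Ideal.map (MvPolynomial.map (algebraMap T T'))
        (Ideal.comap (MvPolynomial.map (algebraMap T F))
          (Ideal.map (MvPolynomial.map (algebraMap T F)) I)) := by
  classical
  set σR : T →+* T' := algebraMap T T' with hσR
  set τ : T →+* F := algebraMap T F with hτ
  set τ' : T' →+* F' := algebraMap T' F' with hτ'
  set υ : T →+* F' := algebraMap T F' with hυdef
  have hυ : υ = τ'.comp σR := IsScalarTower.algebraMap_eq T T' F'
  set R := MvPolynomial (Fin m) T with hR
  set R' := MvPolynomial (Fin m) T' with hR'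
  set P := MvPolynomial (Fin m) F with hP
  set P' := MvPolynomial (Fin m) F' with hP'
  set IF : Ideal P := Ideal.map (MvPolynomial.map τ) I with hIF
  set Isat : Ideal R := Ideal.comap (MvPolynomial.map τ) IF with hIsat
  set M := P ⧸ IF with hM
  haveI hfree : Module.Free F M := Module.Free.of_divisionRing F M
  haveI hflatFM : Module.Flat F M := Module.Flat.of_free
  haveI : Module.Flat T M := Module.Flat.trans T F M
  -- the basic linear map L : R →ₗ[T] M
  set L : R →ₗ[T] M :=
    ((Ideal.Quotient.mkₐ T IF).comp (MvPolynomial.mapAlgHom (Algebra.ofId T F))).toLinearMap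
    with hLdef
  have hL : ∀ p : R, L p = Ideal.Quotient.mk IF (MvPolynomial.map τ p) := fun p => rfl
  have hLker : ∀ p : R, L p = 0 ↔ p ∈ Isat := by
    intro p
    rw [hL, Ideal.Quotient.eq_zero_iff_mem]
    exact Iff.rfl
  set Ssat : Submodule T R := Submodule.restrictScalars T Isat with hSsat
  have hexact : Function.Exact Ssat.subtype L := by
    intro y
    rw [hLker]
    constructor
    · intro hy; exact ⟨⟨y, hy⟩, rfl⟩
    · rintro ⟨⟨z, hz⟩, rfl⟩; exact hz
  set e' : T' ⊗[T] R ≃ₐ[T'] R' := MvPolynomial.algebraTensorAlgEquiv T T' with he'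
  set e'' : F' ⊗[T] R ≃ₐ[F'] P' := MvPolynomial.algebraTensorAlgEquiv T F' with he''
  set ιT : T' →ₗ[T] F' := (Algebra.linearMap T' F').restrictScalars T with hιT
  have hιinj : Function.Injective ιT := hinj'
  -- commutation of the two base changes with the polynomial maps
  have hD1 : ∀ w : T' ⊗[T] R,
      MvPolynomial.map τ' (e' w) = e'' (LinearMap.rTensor R ιT w) := by
    intro w
    induction w using TensorProduct.induction_on with
    | zero => simp
    | tmul t' p =>
        rw [LinearMap.rTensor_tmul, he', he'', MvPolynomial.algebraTensorAlgEquiv_tmul,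
          MvPolynomial.algebraTensorAlgEquiv_tmul, MvPolynomial.smul_eq_C_mul,
          MvPolynomial.smul_eq_C_mul, map_mul, MvPolynomial.map_C, MvPolynomial.map_map,
          hυdef.symm.trans hυ]
        rfl
    | add x y hx hy => simp only [map_add, hx, hy]
  have hD2 : ∀ w : T' ⊗[T] R,
      LinearMap.rTensor M ιT (LinearMap.lTensor T' L w)
        = LinearMap.lTensor F' L (LinearMap.rTensor R ιT w) := by
    intro w
    induction w using TensorProduct.induction_on with
    | zero => simp
    | tmul t' p => simp
    | add x y hx hy => simp only [map_add, hx, hy]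
  -- I ≤ Isat
  have hIle : I ≤ Isat := Ideal.le_comap_map
  -- the extension of I to F'[Y] is killed
  have hmulg : ∀ g : R, g ∈ I → ∀ y : F' ⊗[T] R,
      LinearMap.lTensor F' L (y * (1 ⊗ₜ[T] g)) = 0 := by
    intro g hg y
    induction y using TensorProduct.induction_on with
    | zero => rw [zero_mul, map_zero]
    | tmul a p =>
        rw [Algebra.TensorProduct.tmul_mul_tmul, LinearMap.lTensor_tmul,
          (hLker _).mpr (Isat.mul_mem_left p (hIle hg)), tmul_zero]
    | add y z hy hz => rw [add_mul, map_add, hy, hz, add_zero]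
  have hker : ∀ x ∈ Ideal.map (MvPolynomial.map υ) I, ∀ q : P',
      LinearMap.lTensor F' L (e''.symm (q * x)) = 0 := by
    intro x hx
    have hx' : x ∈ Submodule.span P' ((MvPolynomial.map υ : R →+* P') '' ↑I) := hx
    refine Submodule.span_induction
      (p := fun x _ => ∀ q : P', LinearMap.lTensor F' L (e''.symm (q * x)) = 0)
      ?_ ?_ ?_ ?_ hx'
    · rintro x ⟨g, hg, rfl⟩ q
      have h1 : e'' ((1 : F') ⊗ₜ[T] g) = MvPolynomial.map υ g := by
        rw [he'', MvPolynomial.algebraTensorAlgEquiv_tmul, one_smul, hυdef]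
      rw [map_mul, ← h1, AlgEquiv.symm_apply_apply]
      exact hmulg g hg _
    · intro q; rw [mul_zero, map_zero, map_zero]
    · intro x y hx hy ihx ihy q
      rw [mul_add, map_add, map_add, ihx q, ihy q, add_zero]
    · intro r x hx ih q
      rw [smul_eq_mul, ← mul_assoc]
      exact ih (q * r)
  -- range description of Isat·T'[Y]
  have hmulh : ∀ h : R, h ∈ Isat → ∀ y : T' ⊗[T] R,
      y * (1 ⊗ₜ[T] h) ∈ LinearMap.range (LinearMap.lTensor T' Ssat.subtype) := by
    intro h hh y
    induction y using TensorProduct.induction_on with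
    | zero => rw [zero_mul]; exact Submodule.zero_mem _
    | tmul a p =>
        refine ⟨a ⊗ₜ[T] ⟨p * h, Isat.mul_mem_left p hh⟩, ?_⟩
        rw [LinearMap.lTensor_tmul, Algebra.TensorProduct.tmul_mul_tmul, mul_one]
        rfl
    | add y z hy hz =>
        rw [add_mul]
        exact Submodule.add_mem _ hy hz
  have hrange1 : ∀ x : R', x ∈ Ideal.map (MvPolynomial.map σR) Isat →
      e'.symm x ∈ LinearMap.range (LinearMap.lTensor T' Ssat.subtype) := by
    intro x hx
    have hx' : x ∈ Submodule.span R' ((MvPolynomial.map σR : R →+* R') '' ↑Isat) := hx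
    have main : ∀ q : R',
        e'.symm (q * x) ∈ LinearMap.range (LinearMap.lTensor T' Ssat.subtype) := by
      refine Submodule.span_induction
        (p := fun x _ => ∀ q : R',
          e'.symm (q * x) ∈ LinearMap.range (LinearMap.lTensor T' Ssat.subtype))
        ?_ ?_ ?_ ?_ hx'
      · rintro x ⟨h, hh, rfl⟩ q
        have h1 : e' ((1 : T') ⊗ₜ[T] h) = MvPolynomial.map σR h := by
          rw [he', MvPolynomial.algebraTensorAlgEquiv_tmul, one_smul, hσR]
        rw [map_mul, ← h1, AlgEquiv.symm_apply_apply]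
        exact hmulh h hh _
      · intro q; rw [mul_zero, map_zero]; exact Submodule.zero_mem _
      · intro x y hx hy ihx ihy q
        rw [mul_add, map_add]
        exact Submodule.add_mem _ (ihx q) (ihy q)
      · intro r x hx ih q
        rw [smul_eq_mul, ← mul_assoc]
        exact ih (q * r)
    have := main 1
    rwa [one_mul] at this
  have hrange2 : ∀ z : T' ⊗[T] Ssat,
      e' (LinearMap.lTensor T' Ssat.subtype z) ∈ Ideal.map (MvPolynomial.map σR) Isat := by
    intro z
    induction z using TensorProduct.induction_on with
    | zero => rw [map_zero, map_zero]; exact Ideal.zero_mem _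
    | tmul t' h =>
        rw [LinearMap.lTensor_tmul, he', MvPolynomial.algebraTensorAlgEquiv_tmul,
          MvPolynomial.smul_eq_C_mul]
        exact Ideal.mul_mem_left _ _ (Ideal.mem_map_of_mem _ h.2)
    | add y z hy hz =>
        rw [map_add, map_add]
        exact Ideal.add_mem _ hy hz
  -- main proof
  ext f
  simp only [Ideal.mem_comap]
  constructor
  · intro hf
    have h0 := hker _ hf 1
    rw [one_mul] at h0
    have hw : e''.symm (MvPolynomial.map τ' f) = LinearMap.rTensor R ιT (e'.symm f) := by
      have h2 := hD1 (e'.symm f)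
      rw [AlgEquiv.apply_symm_apply] at h2
      rw [h2, AlgEquiv.symm_apply_apply]
    rw [hw, ← hD2] at h0
    have h1 : LinearMap.lTensor T' L (e'.symm f) = 0 := by
      apply Module.Flat.rTensor_preserves_injective_linearMap (M := M) ιT hιinj
      rw [map_zero]
      exact h0
    have h2 : e'.symm f ∈ Set.range (LinearMap.lTensor T' Ssat.subtype) :=
      ((Module.Flat.lTensor_exact T' hexact) (e'.symm f)).mp h1
    obtain ⟨z, hz⟩ := h2
    have h3 := hrange2 z
    rw [hz, AlgEquiv.apply_symm_apply] at h3
    exact h3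
  · intro hf
    -- easy direction
    have hcomp : (MvPolynomial.map φ).comp (MvPolynomial.map τ)
        = (MvPolynomial.map υ : R →+* P') := by
      refine RingHom.ext fun p => ?_
      rw [RingHom.comp_apply, MvPolynomial.map_map, hτ, hυdef, hφc]
    have Hle : Ideal.map (MvPolynomial.map σR) Isat ≤
        Ideal.comap (MvPolynomial.map τ') (Ideal.map (MvPolynomial.map υ) I) := by
      rw [Ideal.map_le_iff_le_comap]
      intro h hh
      simp only [Ideal.mem_comap]
      have h4 : MvPolynomial.map τ' (MvPolynomial.map σR h) = MvPolynomial.map υ h := by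
        rw [MvPolynomial.map_map, ← hυ]
      rw [h4]
      have h5 : MvPolynomial.map υ h = MvPolynomial.map φ (MvPolynomial.map τ h) := by
        rw [MvPolynomial.map_map, hτ, hυdef, hφc]
      rw [h5]
      have h6 : MvPolynomial.map φ (MvPolynomial.map τ h) ∈
          Ideal.map (MvPolynomial.map φ) (Ideal.map (MvPolynomial.map τ) I) :=
        Ideal.mem_map_of_mem _ hh
      rwa [Ideal.map_map, hcomp] at h6
    exact Hle hf

theorem stmt13 (T T' : Type) [CommRing T] [IsDomain T] [CommRing T'] [IsDomain T']
    [Algebra T T'] (hinj : Function.Injective (algebraMap T T')) [Module.Flat T T']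
    (m : ℕ) (I : Ideal (MvPolynomial (Fin m) T)) (hI : I.FG)
    (φ : FractionRing T →+* FractionRing T')
    (hφ : ∀ t : T, φ (algebraMap T (FractionRing T) t) =
      algebraMap T' (FractionRing T') (algebraMap T T' t)) :
    Ideal.comap (MvPolynomial.map (algebraMap T' (FractionRing T')))
        (Ideal.map
          ((MvPolynomial.map φ).comp (MvPolynomial.map (algebraMap T (FractionRing T)))) I)
      =
    Ideal.map (MvPolynomial.map (algebraMap T T'))
        (Ideal.comap (MvPolynomial.map (algebraMap T (FractionRing T)))
          (Ideal.map (MvPolynomial.map (algebraMap T (FractionRing T))) I)) := by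
  haveI : Module.Flat T (FractionRing T) :=
    IsLocalization.flat (FractionRing T) (nonZeroDivisors T)
  have hinj' : Function.Injective (algebraMap T' (FractionRing T')) :=
    IsFractionRing.injective T' (FractionRing T')
  have hφc : φ.comp (algebraMap T (FractionRing T)) = algebraMap T (FractionRing T') :=
    RingHom.ext fun t => by rw [RingHom.comp_apply, hφ t, ← IsScalarTower.algebraMap_apply]
  have hmaps : (MvPolynomial.map φ).comp (MvPolynomial.map (algebraMap T (FractionRing T)))
      = (MvPolynomial.map (algebraMap T (FractionRing T')) :
          MvPolynomial (Fin m) T →+* MvPolynomial (Fin m) (FractionRing T')) :=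
    RingHom.ext fun p => by rw [RingHom.comp_apply, MvPolynomial.map_map, hφc]
  rw [hmaps]
  exact aux13 T T' (FractionRing T) (FractionRing T') hinj' φ hφc m I
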